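/- Let G be a symmetric n×n real matrix and P, Q, R diagonal n×n real matrices. For a diagonal matrix U = diag(u_1,…,u_n) with 1 − U·G invertible, set Γ = G·(1 − U·G)⁻¹, S = P·U² + 2·Q·U + R and S′ = 2·P·U + 2·Q. Then the identity (1 − G·U)·( Γ·S·Γ + ½·S′·Γ + ½·Γ·S′ + P )·(1 − U·G) = G·R·G + Q·G + G·Q + P holds. Consequently, the equation Γ·S·Γ + ½·S′·Γ + ½·Γ·S′ + P = 0 holds for all diagonal U with 1 − U·G invertible if and only if G satisfies the algebraic Riccati equation G·R·G + Q·G + G·Q + P = 0. -/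
import Mathlib

open Matrix

lemma aux_ring {α : Type*} [Ring α] (g u p q r γ : α)
    (e1 : (1 - g*u)*γ = g) (e2 : γ*(1-u*g) = g)
    (hup : u*p = p*u) (huq : u*q = q*u) :
    (1-g*u) * (γ*(p*u^2 + 2*q*u + r)*γ + (p*u+q)*γ + γ*(p*u+q) + p) * (1-u*g)
      = g*r*g + q*g + g*q + p := by
  have key : (1-g*u) * (γ*(p*u^2 + 2*q*u + r)*γ + (p*u+q)*γ + γ*(p*u+q) + p) * (1-u*g)
      = ((1-g*u)*γ)*(p*u^2 + 2*q*u + r)*(γ*(1-u*g))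
        + (1-g*u)*(p*u+q)*(γ*(1-u*g))
        + ((1-g*u)*γ)*(p*u+q)*(1-u*g)
        + (1-g*u)*p*(1-u*g) := by noncomm_ring
  rw [key, e1, e2]
  have H1 : ∀ x : α, u*(p*x) = p*(u*x) := fun x => by
    rw [← mul_assoc, hup, mul_assoc]
  have H2 : ∀ x : α, u*(q*x) = q*(u*x) := fun x => by
    rw [← mul_assoc, huq, mul_assoc]
  simp only [mul_add, add_mul, sub_mul, mul_sub, one_mul, mul_one, pow_two, two_mul, mul_assoc]
  simp only [hup, huq, H1, H2]
  abel

lemma diag_comm {n : ℕ} {A B : Matrix (Fin n) (Fin n) ℝ} (hA : A.IsDiag) (hB : B.IsDiag) :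
    A * B = B * A := by
  ext i j
  simp only [Matrix.mul_apply]
  refine Finset.sum_congr rfl fun k _ => ?_
  by_cases hik : i = k
  · subst hik
    by_cases hkj : i = j
    · subst hkj; ring
    · rw [hB hkj, hA hkj]; ring
  · rw [hA hik, hB hik]; ring

lemma smul_half {n : ℕ} (P Q U : Matrix (Fin n) (Fin n) ℝ) :
    (2 * P * U + 2 * Q) = (2:ℝ) • (P * U + Q) := by
  rw [two_smul]; noncomm_ring

lemma main_id {n : ℕ} (G P Q R : Matrix (Fin n) (Fin n) ℝ)
    (hG : G.IsSymm) (hP : P.IsDiag) (hQ : Q.IsDiag) (hR : R.IsDiag)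
    (U : Matrix (Fin n) (Fin n) ℝ) (hU : U.IsDiag) (h : IsUnit (1 - U * G)) :
    (1 - G * U) *
        ((G * (1 - U * G)⁻¹) * (P * U ^ 2 + 2 * Q * U + R) * (G * (1 - U * G)⁻¹)
          + (1 / 2 : ℝ) • ((2 * P * U + 2 * Q) * (G * (1 - U * G)⁻¹))
          + (1 / 2 : ℝ) • ((G * (1 - U * G)⁻¹) * (2 * P * U + 2 * Q))
          + P) * (1 - U * G)
        = G * R * G + Q * G + G * Q + P := by
  have hdet : IsUnit (1 - U * G).det := (Matrix.isUnit_iff_isUnit_det _).mp h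
  have e2 : (G * (1 - U * G)⁻¹) * (1 - U * G) = G := by
    rw [mul_assoc, Matrix.nonsing_inv_mul _ hdet, mul_one]
  have e1 : (1 - G * U) * (G * (1 - U * G)⁻¹) = G := by
    have hc : (1 - G * U) * G = G * (1 - U * G) := by noncomm_ring
    rw [← mul_assoc, hc, mul_assoc, Matrix.mul_nonsing_inv _ hdet, mul_one]
  have hs1 : (1 / 2 : ℝ) • ((2 * P * U + 2 * Q) * (G * (1 - U * G)⁻¹))
      = (P * U + Q) * (G * (1 - U * G)⁻¹) := by
    rw [smul_half, smul_mul_assoc, smul_smul]; norm_num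
  have hs2 : (1 / 2 : ℝ) • ((G * (1 - U * G)⁻¹) * (2 * P * U + 2 * Q))
      = (G * (1 - U * G)⁻¹) * (P * U + Q) := by
    rw [smul_half, mul_smul_comm, smul_smul]; norm_num
  rw [hs1, hs2]
  exact aux_ring G U P Q R (G * (1 - U * G)⁻¹) e1 e2 (diag_comm hU hP) (diag_comm hU hQ)

/-- Let `G` be symmetric and `P, Q, R` diagonal.  For diagonal `U`
with `1 - U G` invertible set `Γ = G (1 - U G)⁻¹`, `S = P U² + 2 Q U + R`,
`S' = 2 P U + 2 Q`.  Then
`(1 - G U)(Γ S Γ + ½ S' Γ + ½ Γ S' + P)(1 - U G) = G R G + Q G + G Q + P`.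
Consequently `Γ S Γ + ½ S' Γ + ½ Γ S' + P = 0` holds for all such `U` iff `G`
satisfies the algebraic Riccati equation `G R G + Q G + G Q + P = 0`. -/
theorem stmt7 {n : ℕ} (G P Q R : Matrix (Fin n) (Fin n) ℝ)
    (hG : G.IsSymm) (hP : P.IsDiag) (hQ : Q.IsDiag) (hR : R.IsDiag) :
    (∀ U : Matrix (Fin n) (Fin n) ℝ, U.IsDiag → IsUnit (1 - U * G) →
      (1 - G * U) *
        ((G * (1 - U * G)⁻¹) * (P * U ^ 2 + 2 * Q * U + R) * (G * (1 - U * G)⁻¹)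
          + (1 / 2 : ℝ) • ((2 * P * U + 2 * Q) * (G * (1 - U * G)⁻¹))
          + (1 / 2 : ℝ) • ((G * (1 - U * G)⁻¹) * (2 * P * U + 2 * Q))
          + P) * (1 - U * G)
        = G * R * G + Q * G + G * Q + P) ∧
    ((∀ U : Matrix (Fin n) (Fin n) ℝ, U.IsDiag → IsUnit (1 - U * G) →
        (G * (1 - U * G)⁻¹) * (P * U ^ 2 + 2 * Q * U + R) * (G * (1 - U * G)⁻¹)
          + (1 / 2 : ℝ) • ((2 * P * U + 2 * Q) * (G * (1 - U * G)⁻¹))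
          + (1 / 2 : ℝ) • ((G * (1 - U * G)⁻¹) * (2 * P * U + 2 * Q))
          + P = 0)
      ↔ G * R * G + Q * G + G * Q + P = 0) := by
  refine ⟨fun U hU h => main_id G P Q R hG hP hQ hR U hU h, ?_, ?_⟩
  · intro hall
    have h0 : IsUnit (1 - (0:Matrix (Fin n) (Fin n) ℝ) * G) := by simp
    have hid := main_id G P Q R hG hP hQ hR 0 Matrix.isDiag_zero h0
    rw [hall 0 Matrix.isDiag_zero h0] at hid
    simpa using hid.symm
  · intro hric U hU h
    have hid := main_id G P Q R hG hP hQ hR U hU h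
    rw [hric] at hid
    have hGU : (1 - U * G)ᵀ = 1 - G * U := by
      rw [Matrix.transpose_sub, Matrix.transpose_one, Matrix.transpose_mul, hG.eq, hU.isSymm.eq]
    have hdet2 : IsUnit (1 - G * U).det := by
      rw [← hGU, Matrix.det_transpose]
      exact (Matrix.isUnit_iff_isUnit_det _).mp h
    have hdet : IsUnit (1 - U * G).det := (Matrix.isUnit_iff_isUnit_det _).mp h
    set X := G * (1 - U * G)⁻¹ * (P * U ^ 2 + 2 * Q * U + R) * (G * (1 - U * G)⁻¹) +
          (1 / 2 : ℝ) • ((2 * P * U + 2 * Q) * (G * (1 - U * G)⁻¹)) +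
        (1 / 2 : ℝ) • (G * (1 - U * G)⁻¹ * (2 * P * U + 2 * Q)) +
      P with hX
    rw [mul_assoc] at hid
    have h1 : (1 - G * U)⁻¹ * ((1 - G * U) * (X * (1 - U * G))) = X * (1 - U * G) :=
      Matrix.nonsing_inv_mul_cancel_left _ _ hdet2
    rw [hid, mul_zero] at h1
    have h2 : X * (1 - U * G) * (1 - U * G)⁻¹ = 0 * (1 - U * G)⁻¹ := by rw [← h1]
    rwa [Matrix.mul_nonsing_inv_cancel_right _ _ hdet, zero_mul] at h2
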